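/- Let G be a simple graph on a finite vertex type V, let w : V → ℕ be a weight function, and let S ⊆ V be a set of vertices such that every connected component H of the induced subgraph of G on V \ S satisfies w(H) ≤ w(V)/2. Let λ = 6 + 2√5. Then there exist disjoint sets A, B ⊆ V \ S with A ∪ B = V \ S such that no edge of G joins a vertex of A to a vertex of B, and (w(A) + w(S)) · (w(B) + w(S)) ≥ w(V)²/λ, where for a set F ⊆ V, w(F) denotes Σ_{v ∈ F} w(v) and w(H) denotes the total weight of the vertices of the component H. -/

import Mathlib

open scoped Classical

/-- The total weight `Σ_{v ∈ F} w v` of a set of vertices `F`. -/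
noncomputable def setWeight {V : Type*} [Fintype V] (w : V → ℕ) (F : Set V) : ℕ :=
  ∑ v ∈ F.toFinset, w v

/-- The total weight of the connected component `C` of the subgraph of `G` induced on the
complement of `S` (i.e. of a component of `G − S`). -/
noncomputable def compWeight {V : Type*} [Fintype V] (G : SimpleGraph V) (S : Set V)
    (w : V → ℕ) (C : (G.induce Sᶜ).ConnectedComponent) : ℕ :=
  ∑ v : ↥Sᶜ, if (G.induce Sᶜ).connectedComponentMk v = C then w ↑v else 0

lemma select_cut {ι : Type*} [Fintype ι] (f : ι → ℕ) (s : ℕ)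
    (hW : ∀ C, 2 * f C ≤ s + ∑ C, f C) :
    ∃ T : Finset ι,
      (s + ∑ C, f C) ^ 2 ≤ 8 * (((∑ C ∈ T, f C) + s) * ((∑ C ∈ Tᶜ, f C) + s)) := by
  classical
  set W : ℕ := s + ∑ C, f C with hWdef
  by_cases h : ∃ C, W ≤ 4 * f C
  · obtain ⟨C, hC⟩ := h
    refine ⟨{C}, ?_⟩
    have hsum : (∑ D ∈ ({C} : Finset ι), f D) + (∑ D ∈ ({C} : Finset ι)ᶜ, f D) = ∑ D, f D :=
      Finset.sum_add_sum_compl _ _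
    rw [Finset.sum_singleton] at hsum ⊢
    have h2 : 2 * f C ≤ W := hW C
    set b := ∑ D ∈ ({C} : Finset ι)ᶜ, f D
    have k1 : W ≤ 4 * (f C + s) := by omega
    have k2 : W ≤ 2 * (b + s) := by omega
    calc W ^ 2 = W * W := sq W
    _ ≤ (4 * (f C + s)) * (2 * (b + s)) := Nat.mul_le_mul k1 k2
    _ = 8 * ((f C + s) * (b + s)) := by ring
  · push_neg at h
    obtain ⟨T, hTmem, hTmax⟩ := Finset.exists_max_image
      (Finset.univ.filter fun T : Finset ι => 2 * ∑ C ∈ T, f C ≤ ∑ C, f C)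
      (fun T => ∑ C ∈ T, f C)
      ⟨∅, by simp⟩
    simp only [Finset.mem_filter, Finset.mem_univ, true_and] at hTmem
    set a := ∑ C ∈ T, f C with ha
    set b := ∑ C ∈ Tᶜ, f C with hb
    have hsum : a + b = ∑ C, f C := Finset.sum_add_sum_compl _ _
    by_cases hz : ∀ C ∈ Tᶜ, f C = 0
    · have hb0 : b = 0 := Finset.sum_eq_zero hz
      refine ⟨T, ?_⟩
      rw [← ha, ← hb, hb0]
      have ha0 : a = 0 := by omega
      have hM : W = s := by omega
      rw [ha0, hM]
      nlinarith [sq_nonneg s]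
    · push_neg at hz
      obtain ⟨C, hCmem, hC0⟩ := hz
      have hCT : C ∉ T := by simpa using hCmem
      have hins : a + f C = ∑ D ∈ insert C T, f D := by
        rw [Finset.sum_insert hCT]; omega
      have hbig : ∑ C, f C < 2 * (a + f C) := by
        by_contra hle
        push_neg at hle
        have := hTmax (insert C T) (by
          simp only [Finset.mem_filter, Finset.mem_univ, true_and]
          omega)
        rw [← hins] at this
        omega
      have hfC : 4 * f C < W := h C
      refine ⟨T, ?_⟩
      rw [← ha, ← hb]
      have k1 : W ≤ 4 * (a + s) := by omega
      have k2 : W ≤ 2 * (b + s) := by omega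
      calc W ^ 2 = W * W := sq W
      _ ≤ (4 * (a + s)) * (2 * (b + s)) := Nat.mul_le_mul k1 k2
      _ = 8 * ((a + s) * (b + s)) := by ring

lemma setWeight_image_components {V : Type*} [Fintype V] (G : SimpleGraph V) (S : Set V)
    (w : V → ℕ) (T : Finset (G.induce Sᶜ).ConnectedComponent) :
    setWeight w (Subtype.val '' {x : ↥Sᶜ | (G.induce Sᶜ).connectedComponentMk x ∈ T}) =
      ∑ C ∈ T, compWeight G S w C := by
  classical
  unfold setWeight compWeight
  rw [Finset.sum_comm]
  rw [Set.toFinset_image, Finset.sum_image (by intro x _ y _ h; exact Subtype.ext h)]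
  rw [Set.toFinset_setOf, Finset.sum_filter]
  refine Finset.sum_congr rfl fun x _ => ?_
  rw [Finset.sum_ite_eq]

theorem exists_vertex_cut_of_balanced_separator {V : Type*} [Fintype V]
    (G : SimpleGraph V) (w : V → ℕ) (S : Set V)
    (hsep : ∀ C : (G.induce Sᶜ).ConnectedComponent,
      (compWeight G S w C : ℝ) ≤ (∑ v : V, w v : ℕ) / 2) :
    ∃ A B : Set V, A ⊆ Sᶜ ∧ B ⊆ Sᶜ ∧ Disjoint A B ∧ A ∪ B = Sᶜ ∧
      (∀ a ∈ A, ∀ b ∈ B, ¬ G.Adj a b) ∧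
      ((setWeight w A : ℝ) + setWeight w S) * ((setWeight w B : ℝ) + setWeight w S) ≥
        ((∑ v : V, w v : ℕ) : ℝ) ^ 2 / (6 + 2 * Real.sqrt 5) := by
  classical
  set W : ℕ := ∑ v : V, w v with hWdef
  set f : (G.induce Sᶜ).ConnectedComponent → ℕ := compWeight G S w with hf
  set s : ℕ := setWeight w S with hs
  -- total weight decomposition
  have hScompl : setWeight w (Sᶜ) = ∑ C, f C := by
    have := setWeight_image_components G S w Finset.univ
    rw [hf]
    convert this using 2
    ext x
    simp
  have htot : s + ∑ C, f C = W := by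
    rw [← hScompl, hs]
    unfold setWeight
    rw [hWdef, Set.toFinset_compl]
    exact Finset.sum_add_sum_compl _ _
  have hhalf : ∀ C, 2 * f C ≤ s + ∑ C, f C := by
    intro C
    rw [htot]
    have := hsep C
    have h2 : (2 * f C : ℝ) ≤ (W : ℝ) := by
      rw [hWdef] at this ⊢
      push_cast at this ⊢
      linarith
    exact_mod_cast h2
  obtain ⟨T, hT⟩ := select_cut f s hhalf
  rw [htot] at hT
  refine ⟨Subtype.val '' {x : ↥Sᶜ | (G.induce Sᶜ).connectedComponentMk x ∈ T},
          Subtype.val '' {x : ↥Sᶜ | (G.induce Sᶜ).connectedComponentMk x ∈ Tᶜ},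
          ?_, ?_, ?_, ?_, ?_, ?_⟩
  · rintro _ ⟨x, -, rfl⟩; exact x.2
  · rintro _ ⟨x, -, rfl⟩; exact x.2
  · rw [Set.disjoint_left]
    rintro _ ⟨x, hx, rfl⟩ ⟨y, hy, hxy⟩
    have : y = x := Subtype.ext hxy
    subst this
    simp only [Set.mem_setOf_eq, Finset.mem_compl] at hx hy
    exact hy hx
  · ext v
    constructor
    · rintro (⟨x, -, rfl⟩ | ⟨x, -, rfl⟩) <;> exact x.2
    · intro hv
      by_cases hvm : (G.induce Sᶜ).connectedComponentMk ⟨v, hv⟩ ∈ T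
      · exact Or.inl ⟨⟨v, hv⟩, hvm, rfl⟩
      · exact Or.inr ⟨⟨v, hv⟩, by simpa using hvm, rfl⟩
  · rintro _ ⟨x, hx, rfl⟩ _ ⟨y, hy, rfl⟩ hadj
    have hadj' : (G.induce Sᶜ).Adj x y := hadj
    have heq := SimpleGraph.ConnectedComponent.sound hadj'.reachable
    simp only [Set.mem_setOf_eq, Finset.mem_compl] at hx hy
    rw [heq] at hx
    exact hy hx
  · rw [setWeight_image_components G S w T, setWeight_image_components G S w Tᶜ]
    have h5 : (2 : ℝ) ≤ Real.sqrt 5 := by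
      nlinarith [Real.sq_sqrt (by norm_num : (0:ℝ) ≤ 5), Real.sqrt_nonneg 5]
    have hlam : (8 : ℝ) ≤ 6 + 2 * Real.sqrt 5 := by linarith
    have hTR : ((W : ℝ)) ^ 2 ≤
        8 * (((∑ C ∈ T, f C : ℕ) + (s : ℝ)) * ((∑ C ∈ Tᶜ, f C : ℕ) + (s : ℝ))) := by
      exact_mod_cast hT
    have hprod : (0 : ℝ) ≤ ((∑ C ∈ T, f C : ℕ) + (s : ℝ)) * ((∑ C ∈ Tᶜ, f C : ℕ) + (s : ℝ)) := by
      positivity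
    rw [ge_iff_le, div_le_iff₀ (by linarith)]
    nlinarith [hTR, hprod]
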